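/- arXiv:1306.5858 — 3 statements merged into one kernel-verified Lean document; each statement's English description precedes it below -/
import Mathlib

section
/- (Lemma 1, flipping) Let P = (a_1, a_2, ..., a_k) be a legal plan from the initial state I of an MA-STRIPS problem Π, and let a_i, a_{i+1} be two consecutive actions of P belonging to two different agents, at least one of which is private. Then P' = (a_1, ..., a_{i−1}, a_{i+1}, a_i, a_{i+2}, ..., a_k) is a legal plan from I for Π, and the final state produced by P' from I equals the final state produced by P from I. -/
/-- A STRIPS action over a set of propositions `P`. -/
structure StripsAction (P : Type*) where
  pre : Set P
  add : Set P
  del : Set P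

namespace StripsAction

variable {P : Type*}

/-- The variable set of an action: all propositions it mentions. -/
def varset (a : StripsAction P) : Set P := a.pre ∪ a.add ∪ a.del

/-- An action is applicable in state `s` iff its preconditions hold in `s`. -/
def Applicable (a : StripsAction P) (s : Set P) : Prop := a.pre ⊆ s

/-- Applying an action to a state: `a(s) = (s \ del(a)) ∪ add(a)`. -/
def apply (a : StripsAction P) (s : Set P) : Set P := (s \ a.del) ∪ a.add

end StripsAction

/-- The state obtained by applying a sequence of actions in order. -/
def applySeq {P : Type*} : List (StripsAction P) → Set P → Set P
  | [], s => s
  | a :: rest, s => applySeq rest (a.apply s)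

/-- A sequence of actions is a legal plan from `s` iff each action is applicable in the
state obtained by applying the previous ones in order. -/
def LegalPlan {P : Type*} : List (StripsAction P) → Set P → Prop
  | [], _ => True
  | a :: rest, s => a.Applicable s ∧ LegalPlan rest (a.apply s)

/-- An MA-STRIPS problem: pairwise-disjoint finite action sets `A i` (one per agent),
an initial state and a goal. -/
structure MAProblem (P Ag : Type*) where
  A : Ag → Set (StripsAction P)
  disjoint : ∀ i j : Ag, i ≠ j → Disjoint (A i) (A j)
  finite : ∀ i : Ag, (A i).Finite
  I : Set P
  G : Set P

namespace MAProblem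

variable {P Ag : Type*}

/-- Proposition `p` is private to agent `i` iff every action mentioning `p` belongs to
`A i`. -/
def PrivateProp (pb : MAProblem P Ag) (p : P) (i : Ag) : Prop :=
  ∀ j : Ag, ∀ a ∈ pb.A j, p ∈ a.varset → j = i

/-- An action `a ∈ A i` is private iff every proposition it mentions is private to `i`. -/
def PrivateAction (pb : MAProblem P Ag) (a : StripsAction P) (i : Ag) : Prop :=
  a ∈ pb.A i ∧ ∀ p ∈ a.varset, pb.PrivateProp p i

/-- An action of the problem is public iff it is not private. -/
def PublicAction (pb : MAProblem P Ag) (a : StripsAction P) : Prop :=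
  (∃ i, a ∈ pb.A i) ∧ ∀ i : Ag, ¬ pb.PrivateAction a i

end MAProblem

lemma swap_step {P : Type*} (a b : StripsAction P)
    (hd : ∀ p, p ∈ a.varset → p ∈ b.varset → False)
    (s : Set P) (ha : a.Applicable s) (hb : b.Applicable (a.apply s)) :
    b.Applicable s ∧ a.Applicable (b.apply s) ∧
      a.apply (b.apply s) = b.apply (a.apply s) := by
  have hav : ∀ p, p ∈ a.pre ∨ p ∈ a.add ∨ p ∈ a.del → p ∈ a.varset := by
    intro p hp
    simp only [StripsAction.varset, Set.mem_union]
    tauto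
  have hbv : ∀ p, p ∈ b.pre ∨ p ∈ b.add ∨ p ∈ b.del → p ∈ b.varset := by
    intro p hp
    simp only [StripsAction.varset, Set.mem_union]
    tauto
  refine ⟨?_, ?_, ?_⟩
  · intro p hp
    rcases hb hp with ⟨hps, _⟩ | hpa
    · exact hps
    · exact absurd (hd p (hav p (Or.inr (Or.inl hpa))) (hbv p (Or.inl hp))) (by tauto)
  · intro p hp
    have hps := ha hp
    exact Or.inl ⟨hps, fun hdel => hd p (hav p (Or.inl hp)) (hbv p (Or.inr (Or.inr hdel)))⟩
  · ext p
    simp only [StripsAction.apply, Set.mem_union, Set.mem_diff]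
    constructor
    · rintro (⟨(⟨hs, hdb⟩ | hab), hda⟩ | haa)
      · exact Or.inl ⟨Or.inl ⟨hs, hda⟩, hdb⟩
      · exact Or.inr hab
      · exact Or.inl ⟨Or.inr haa, fun hdb =>
          hd p (hav p (Or.inr (Or.inl haa))) (hbv p (Or.inr (Or.inr hdb)))⟩
    · rintro (⟨(⟨hs, hda⟩ | haa), hdb⟩ | hab)
      · exact Or.inl ⟨Or.inl ⟨hs, hdb⟩, hda⟩
      · exact Or.inr haa
      · exact Or.inl ⟨Or.inr hab, fun hda =>
          hd p (hav p (Or.inr (Or.inr hda))) (hbv p (Or.inr (Or.inl hab)))⟩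

lemma flip_aux {P : Type*} (a b : StripsAction P)
    (hd : ∀ p, p ∈ a.varset → p ∈ b.varset → False) :
    ∀ (L1 L2 : List (StripsAction P)) (s : Set P),
    LegalPlan (L1 ++ a :: b :: L2) s →
    LegalPlan (L1 ++ b :: a :: L2) s ∧
      applySeq (L1 ++ b :: a :: L2) s = applySeq (L1 ++ a :: b :: L2) s := by
  intro L1
  induction L1 with
  | nil =>
    intro L2 s h
    obtain ⟨ha, hb, hrest⟩ := h
    obtain ⟨hb', ha', heq⟩ := swap_step a b hd s ha hb
    refine ⟨⟨hb', ha', ?_⟩, ?_⟩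
    · simpa [heq] using hrest
    · simp only [List.nil_append, applySeq, heq]
  | cons c L1 ih =>
    intro L2 s h
    obtain ⟨hc, hrest⟩ := h
    obtain ⟨h1, h2⟩ := ih L2 (c.apply s) hrest
    exact ⟨⟨hc, h1⟩, h2⟩

/-- Lemma 1, flipping: if `L1 ++ a :: b :: L2` is a legal plan from `I`
whose actions all belong to agents of the problem, `a` and `b` belong to two different
agents, and at least one of them is private, then swapping `a` and `b` yields a legal
plan from `I` with the same final state. -/
theorem flipping {P Ag : Type*} [Finite P] (pb : MAProblem P Ag)
    (i j : Ag) (hij : i ≠ j) (a b : StripsAction P)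
    (ha : a ∈ pb.A i) (hb : b ∈ pb.A j)
    (hpriv : pb.PrivateAction a i ∨ pb.PrivateAction b j)
    (L1 L2 : List (StripsAction P))
    (hmem : ∀ x ∈ L1 ++ a :: b :: L2, ∃ k, x ∈ pb.A k)
    (hlegal : LegalPlan (L1 ++ a :: b :: L2) pb.I) :
    LegalPlan (L1 ++ b :: a :: L2) pb.I ∧
      applySeq (L1 ++ b :: a :: L2) pb.I = applySeq (L1 ++ a :: b :: L2) pb.I := by
  have hd : ∀ p, p ∈ a.varset → p ∈ b.varset → False := by
    intro p hpa hpb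
    rcases hpriv with h | h
    · exact hij ((h.2 p hpa j b hb hpb).symm) |>.elim
    · exact hij (h.2 p hpb i a ha hpa)
  exact flip_aux a b hd L1 L2 pb.I hlegal
end

section
/- Let P = (a_1, ..., a_k) be a legal plan from the initial state I of an MA-STRIPS problem, let a_i be a private action of agent φ, and suppose that the actions a_{i+1}, ..., a_j (for some j with i < j ≤ k) all belong to agents other than φ. Then the sequence obtained from P by moving a_i to the position immediately after a_j is a legal plan from I producing the same final state as P. -/
section Helpers

variable {P : Type*}

/-- Two actions are independent if their variable sets are disjoint. -/
def Indep (a b : StripsAction P) : Prop := ∀ p ∈ a.varset, p ∉ b.varset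

lemma Indep.commute {a b : StripsAction P} (h : Indep a b) (s : Set P) :
    b.apply (a.apply s) = a.apply (b.apply s) := by
  ext p
  by_cases ha : p ∈ a.varset
  · have hb := h p ha
    simp only [StripsAction.apply, StripsAction.varset, Set.mem_union, Set.mem_diff,
      not_or] at *
    tauto
  · simp only [StripsAction.apply, StripsAction.varset, Set.mem_union, Set.mem_diff,
      not_or] at *
    tauto

lemma Indep.applicable_fwd {a b : StripsAction P} (h : Indep a b) {s : Set P}
    (ha : a.Applicable s) : a.Applicable (b.apply s) := by
  intro p hp
  have hb := h p (Or.inl (Or.inl hp))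
  simp only [StripsAction.varset, Set.mem_union, not_or] at hb
  exact Or.inl ⟨ha hp, hb.2⟩

lemma Indep.applicable_back {a b : StripsAction P} (h : Indep a b) {s : Set P}
    (hb : b.Applicable (a.apply s)) : b.Applicable s := by
  intro p hp
  have hpa : p ∉ a.varset := fun hpa => h p hpa (Or.inl (Or.inl hp))
  simp only [StripsAction.varset, Set.mem_union, not_or] at hpa
  rcases hb hp with h1 | h1
  · exact h1.1
  · exact absurd h1 hpa.1.2

lemma applySeq_append (L1 L2 : List (StripsAction P)) (s : Set P) :
    applySeq (L1 ++ L2) s = applySeq L2 (applySeq L1 s) := by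
  induction L1 generalizing s with
  | nil => rfl
  | cons a L ih => simp [applySeq, ih]

lemma legalPlan_append (L1 L2 : List (StripsAction P)) (s : Set P) :
    LegalPlan (L1 ++ L2) s ↔ LegalPlan L1 s ∧ LegalPlan L2 (applySeq L1 s) := by
  induction L1 generalizing s with
  | nil => simp [LegalPlan, applySeq]
  | cons a L ih => simp [LegalPlan, applySeq, ih, and_assoc]

lemma applySeq_comm {a : StripsAction P} (M : List (StripsAction P))
    (h : ∀ b ∈ M, Indep a b) (s : Set P) :
    applySeq M (a.apply s) = a.apply (applySeq M s) := by
  induction M generalizing s with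
  | nil => rfl
  | cons b M ih =>
    have hb : Indep a b := h b (by simp)
    simp only [applySeq]
    rw [hb.commute, ih (fun c hc => h c (by simp [hc]))]

lemma legal_move {a : StripsAction P} (M L2 : List (StripsAction P))
    (h : ∀ b ∈ M, Indep a b) (s : Set P)
    (hl : LegalPlan (a :: (M ++ L2)) s) : LegalPlan (M ++ a :: L2) s := by
  induction M generalizing s with
  | nil => exact hl
  | cons b M ih =>
    obtain ⟨ha, hb, hrest⟩ := hl
    have hab : Indep a b := h b (by simp)
    refine ⟨hab.applicable_back hb, ih (fun c hc => h c (by simp [hc])) (b.apply s) ?_⟩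
    refine ⟨hab.applicable_fwd ha, ?_⟩
    rwa [← hab.commute]

end Helpers

/-- a private action `a` of agent `i` can be moved past a nonempty block `M`
of actions, all belonging to agents other than `i`, preserving legality of the plan from
`I` and its final state. -/
theorem move_private_action {P Ag : Type*} [Finite P] (pb : MAProblem P Ag)
    (i : Ag) (a : StripsAction P) (hpriv : pb.PrivateAction a i)
    (L1 M L2 : List (StripsAction P)) (hM : M ≠ [])
    (hMother : ∀ b ∈ M, ∃ j, j ≠ i ∧ b ∈ pb.A j)
    (hmem : ∀ x ∈ L1 ++ a :: (M ++ L2), ∃ k, x ∈ pb.A k)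
    (hlegal : LegalPlan (L1 ++ a :: (M ++ L2)) pb.I) :
    LegalPlan (L1 ++ M ++ a :: L2) pb.I ∧
      applySeq (L1 ++ M ++ a :: L2) pb.I = applySeq (L1 ++ a :: (M ++ L2)) pb.I := by
  have hindep : ∀ b ∈ M, Indep a b := by
    intro b hb p hpa hpb
    obtain ⟨j, hji, hbj⟩ := hMother b hb
    exact hji (hpriv.2 p hpa j b hbj hpb)
  rw [legalPlan_append] at hlegal
  obtain ⟨hL1, hrest⟩ := hlegal
  constructor
  · rw [List.append_assoc, legalPlan_append]
    exact ⟨hL1, legal_move M L2 hindep _ hrest⟩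
  · rw [List.append_assoc, applySeq_append, applySeq_append]
    set s1 := applySeq L1 pb.I
    rw [applySeq_append]
    show applySeq (a :: L2) (applySeq M s1) = applySeq (M ++ L2) (a.apply s1)
    rw [applySeq_append]
    show applySeq L2 (a.apply (applySeq M s1)) = _
    rw [← applySeq_comm M hindep]
end

section
/- (Partition-based pruning preserves completeness) Let Π = ⟨P, A, I, G⟩ be a STRIPS planning problem and A = A_1 ⊎ ... ⊎ A_n an arbitrary partition of its actions into disjoint sets, with private and public propositions and actions defined with respect to this partition as in MA-STRIPS. Assume every proposition in G is public. If Π has a solution, then Π has a solution that survives partition-based pruning, i.e., a solution in which every action that immediately follows a private action belonging to some A_i itself belongs to A_i. -/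
/-- The cost of a plan is the sum of the costs of its actions. -/
def planCost {P : Type*} (cost : StripsAction P → ℝ) (L : List (StripsAction P)) : ℝ :=
  (L.map cost).sum

/-- A solution of an MA-STRIPS problem: a legal plan from `I`, built from the agents'
actions, whose final state contains the goal. -/
def Solution {P Ag : Type*} (pb : MAProblem P Ag) (L : List (StripsAction P)) : Prop :=
  (∀ x ∈ L, ∃ k, x ∈ pb.A k) ∧ LegalPlan L pb.I ∧ pb.G ⊆ applySeq L pb.I

/-- A solution is optimal iff no solution has strictly smaller cost. -/
def OptimalSolution {P Ag : Type*} (pb : MAProblem P Ag) (cost : StripsAction P → ℝ)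
    (L : List (StripsAction P)) : Prop :=
  Solution pb L ∧ ∀ L' : List (StripsAction P), Solution pb L' →
    planCost cost L ≤ planCost cost L'

/-- A plan survives partition-based pruning iff every action that immediately follows a
private action belonging to some `A i` itself belongs to `A i`. -/
def SurvivesPruning {P Ag : Type*} (pb : MAProblem P Ag) (L : List (StripsAction P)) : Prop :=
  ∀ (k : ℕ) (hk : k + 1 < L.length) (i : Ag),
    pb.PrivateAction (L.get ⟨k, Nat.lt_of_succ_lt hk⟩) i → L.get ⟨k + 1, hk⟩ ∈ pb.A i


section Aux

open StripsAction

variable {P Ag : Type*}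

/-- The pairwise relation whose `Chain'` is exactly `SurvivesPruning`. -/
def PruneRel (pb : MAProblem P Ag) (x y : StripsAction P) : Prop :=
  ∀ i, pb.PrivateAction x i → y ∈ pb.A i

lemma survives_iff_chain' (pb : MAProblem P Ag) (L : List (StripsAction P)) :
    SurvivesPruning pb L ↔ List.Chain' (PruneRel pb) L := by
  rw [List.Chain', List.isChain_iff_getElem]
  constructor
  · intro h k hk
    intro i hi
    exact h k (by omega) i hi
  · intro h k hk i hi
    exact h k (by omega) i hi

/-- Two states agree on all public (non-private) propositions. -/
def PubAgree (pb : MAProblem P Ag) (s t : Set P) : Prop :=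
  ∀ p, (∀ i, ¬ pb.PrivateProp p i) → (p ∈ s ↔ p ∈ t)

lemma PubAgree.refl (pb : MAProblem P Ag) (s : Set P) : PubAgree pb s s :=
  fun _ _ => Iff.rfl

lemma PubAgree.trans {pb : MAProblem P Ag} {s t u : Set P}
    (h1 : PubAgree pb s t) (h2 : PubAgree pb t u) : PubAgree pb s u :=
  fun p hp => (h1 p hp).trans (h2 p hp)

lemma varset_disjoint {pb : MAProblem P Ag} {a b : StripsAction P} {i : Ag}
    (ha : pb.PrivateAction a i) (hb : ∃ j, b ∈ pb.A j) (hbi : b ∉ pb.A i) :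
    ∀ p ∈ a.varset, p ∉ b.varset := by
  rintro p hpa hpb
  obtain ⟨j, hj⟩ := hb
  have hji : j = i := ha.2 p hpa j b hj hpb
  exact hbi (hji ▸ hj)

lemma applicable_comm {a b : StripsAction P} {s : Set P}
    (hd : ∀ p ∈ a.varset, p ∉ b.varset) (hb : b.Applicable (a.apply s)) :
    b.Applicable s := by
  intro p hp
  have hnb : p ∈ b.varset := Or.inl (Or.inl hp)
  have := hb hp
  rcases this with ⟨hs, _⟩ | hadd
  · exact hs
  · exact absurd hnb (hd p (Or.inl (Or.inr hadd)))

lemma applicable_after {a b : StripsAction P} {s : Set P}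
    (hd : ∀ p ∈ a.varset, p ∉ b.varset) (ha : a.Applicable s) :
    a.Applicable (b.apply s) := by
  intro p hp
  have hnb : p ∉ b.varset := hd p (Or.inl (Or.inl hp))
  exact Or.inl ⟨ha hp, fun h => hnb (Or.inr h)⟩

lemma apply_comm {a b : StripsAction P} (hd : ∀ p ∈ a.varset, p ∉ b.varset) (s : Set P) :
    b.apply (a.apply s) = a.apply (b.apply s) := by
  ext p
  by_cases hpa : p ∈ a.varset
  · have hpb : p ∉ b.varset := hd p hpa
    have h1 : p ∉ b.add := fun h => hpb (Or.inl (Or.inr h))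
    have h2 : p ∉ b.del := fun h => hpb (Or.inr h)
    simp only [StripsAction.apply, Set.mem_union, Set.mem_diff]
    tauto
  · have h1 : p ∉ a.add := fun h => hpa (Or.inl (Or.inr h))
    have h2 : p ∉ a.del := fun h => hpa (Or.inr h)
    simp only [StripsAction.apply, Set.mem_union, Set.mem_diff]
    tauto

lemma pubAgree_apply_private {pb : MAProblem P Ag} {a : StripsAction P} {i : Ag}
    (ha : pb.PrivateAction a i) (s : Set P) : PubAgree pb s (a.apply s) := by
  intro p hp
  have hpv : p ∉ a.varset := fun h => hp i (ha.2 p h)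
  have h1 : p ∉ a.add := fun h => hpv (Or.inl (Or.inr h))
  have h2 : p ∉ a.del := fun h => hpv (Or.inr h)
  simp only [StripsAction.apply, Set.mem_union, Set.mem_diff]
  tauto

/-- Push a private action rightward through a surviving plan (or drop it at the end). -/
lemma push (pb : MAProblem P Ag) :
    ∀ (L : List (StripsAction P)) (s : Set P) (a : StripsAction P) (i : Ag),
    (∀ x ∈ L, ∃ k, x ∈ pb.A k) → pb.PrivateAction a i → a.Applicable s →
    LegalPlan L (a.apply s) → List.Chain' (PruneRel pb) L →
    ∃ L', (∀ x ∈ L', x = a ∨ x ∈ L) ∧ LegalPlan L' s ∧ List.Chain' (PruneRel pb) L' ∧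
      (L'.head? = L.head? ∨ (L'.head? = some a ∧ ∃ c, L.head? = some c ∧ c ∈ pb.A i)) ∧
      PubAgree pb (applySeq L' s) (applySeq L (a.apply s)) := by
  intro L
  induction L with
  | nil =>
    intro s a i _ ha _ _ _
    exact ⟨[], by simp, trivial, List.isChain_nil, Or.inl rfl,
      pubAgree_apply_private ha s⟩
  | cons b t ih =>
    intro s a i hmem ha happ hleg hch
    by_cases hb : b ∈ pb.A i
    · refine ⟨a :: b :: t, ?_, ⟨happ, hleg⟩, ?_, ?_, PubAgree.refl pb _⟩
      · intro x hx
        rcases List.mem_cons.mp hx with h | h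
        · exact Or.inl h
        · exact Or.inr h
      · rw [List.Chain', List.isChain_cons_cons]
        refine ⟨?_, hch⟩
        intro j hj
        have hij : j = i := by
          by_contra hne
          exact (Set.disjoint_left.mp (pb.disjoint j i hne) hj.1) ha.1
        exact hij ▸ hb
      · exact Or.inr ⟨rfl, b, rfl, hb⟩
    · -- b ∉ A i : a commutes with b, push into the tail
      have hbj : ∃ j, b ∈ pb.A j := hmem b (List.mem_cons_self)
      have hd : ∀ p ∈ a.varset, p ∉ b.varset := varset_disjoint ha hbj hb
      have hbapp : b.Applicable s := applicable_comm hd hleg.1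
      have haapp : a.Applicable (b.apply s) := applicable_after hd happ
      have hlegt : LegalPlan t (a.apply (b.apply s)) := by
        have := hleg.2
        rwa [apply_comm hd s] at this
      have hcht : List.Chain' (PruneRel pb) t := (List.isChain_cons.mp hch).2
      have hrelb : ∀ y ∈ t.head?, PruneRel pb b y := (List.isChain_cons.mp hch).1
      obtain ⟨t', ht'mem, ht'leg, ht'ch, ht'hd, ht'pa⟩ :=
        ih (b.apply s) a i (fun x hx => hmem x (List.mem_cons_of_mem b hx)) ha haapp
          hlegt hcht
      refine ⟨b :: t', ?_, ⟨hbapp, ht'leg⟩, ?_, Or.inl rfl, ?_⟩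
      · intro x hx
        rcases List.mem_cons.mp hx with h | h
        · exact Or.inr (h ▸ List.mem_cons_self)
        · rcases ht'mem x h with h' | h'
          · exact Or.inl h'
          · exact Or.inr (List.mem_cons_of_mem b h')
      · rw [List.Chain', List.isChain_cons]
        refine ⟨?_, ht'ch⟩
        intro y hy j hj
        rcases ht'hd with hsame | ⟨hha, c, hc, hci⟩
        · exact hrelb y (hsame ▸ hy) j hj
        · -- y = a, head of t is c ∈ A i, and b is private to j
          have hya : y = a := by
            rw [hha] at hy
            exact (Option.mem_some_iff.mp hy).symm
          have hcj : c ∈ pb.A j := hrelb c hc j hj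
          have hij : i = j := by
            by_contra hne
            exact (Set.disjoint_left.mp (pb.disjoint i j hne) hci) hcj
          exact hya ▸ (hij ▸ ha.1)
      · show PubAgree pb (applySeq t' (b.apply s)) (applySeq t (b.apply (a.apply s)))
        rw [apply_comm hd s]
        exact ht'pa

lemma main_lemma (pb : MAProblem P Ag) :
    ∀ (L : List (StripsAction P)) (s : Set P),
    (∀ x ∈ L, ∃ k, x ∈ pb.A k) → LegalPlan L s →
    ∃ L', (∀ x ∈ L', ∃ k, x ∈ pb.A k) ∧ LegalPlan L' s ∧ List.Chain' (PruneRel pb) L' ∧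
      PubAgree pb (applySeq L' s) (applySeq L s) := by
  intro L
  induction L with
  | nil =>
    intro s _ _
    exact ⟨[], by simp, trivial, List.isChain_nil, PubAgree.refl pb s⟩
  | cons a rest ih =>
    intro s hmem hleg
    obtain ⟨rest', hr'mem, hr'leg, hr'ch, hr'pa⟩ :=
      ih (a.apply s) (fun x hx => hmem x (List.mem_cons_of_mem a hx)) hleg.2
    by_cases hpriv : ∃ i, pb.PrivateAction a i
    · obtain ⟨i, hi⟩ := hpriv
      obtain ⟨L'', hmem'', hleg'', hch'', _, hpa''⟩ :=
        push pb rest' s a i hr'mem hi hleg.1 hr'leg hr'ch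
      refine ⟨L'', ?_, hleg'', hch'', ?_⟩
      · intro x hx
        rcases hmem'' x hx with h | h
        · exact h ▸ ⟨i, hi.1⟩
        · exact hr'mem x h
      · exact hpa''.trans hr'pa
    · refine ⟨a :: rest', ?_, ⟨hleg.1, hr'leg⟩, ?_, hr'pa⟩
      · intro x hx
        rcases List.mem_cons.mp hx with h | h
        · exact h ▸ hmem a (List.mem_cons_self)
        · exact hr'mem x h
      · rw [List.Chain', List.isChain_cons]
        refine ⟨?_, hr'ch⟩
        intro y _ j hj
        exact absurd ⟨j, hj⟩ hpriv

end Aux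

/-- partition-based pruning preserves completeness: for a STRIPS problem
whose (finite) action set is partitioned into disjoint sets `A i` (modelled by
`MAProblem` with a finite index type), with a goal made of public propositions only:
if the problem has a solution, then it has a solution that survives partition-based
pruning. -/
theorem pb_pruning_preserves_completeness {P Ag : Type*} [Finite P] [Finite Ag]
    (pb : MAProblem P Ag)
    (hG : ∀ p ∈ pb.G, ∀ i : Ag, ¬ pb.PrivateProp p i)
    (L : List (StripsAction P)) (hsol : Solution pb L) :
    ∃ L' : List (StripsAction P), Solution pb L' ∧ SurvivesPruning pb L' := by
  obtain ⟨L', hmem, hleg, hch, hpa⟩ := main_lemma pb L pb.I hsol.1 hsol.2.1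
  refine ⟨L', ⟨hmem, hleg, ?_⟩, (survives_iff_chain' pb L').mpr hch⟩
  intro p hp
  exact (hpa p (hG p hp)).mpr (hsol.2.2 hp)
end
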